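/- Let f ∈ ℚ⟦X⟧ satisfy constantCoeff f = 1 and f² = 1 + X². Then for every n ∈ ℕ the denominator of the rational number coeff n f (in lowest terms) is a power of 2, i.e. there exists k ∈ ℕ with (coeff n f).den = 2^k. -/

import Mathlib

open PowerSeries

def Dy (q : ℚ) : Prop := ∃ k : ℕ, q.den = 2 ^ k

lemma dy_of_dvd {q : ℚ} {m : ℕ} (h : q.den ∣ 2 ^ m) : Dy q :=
  (Nat.dvd_prime_pow Nat.prime_two).mp h |>.imp fun k hk => hk.2

lemma Dy.add {q r : ℚ} (hq : Dy q) (hr : Dy r) : Dy (q + r) := by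
  obtain ⟨a, ha⟩ := hq; obtain ⟨b, hb⟩ := hr
  exact dy_of_dvd (m := a + b) (by rw [pow_add, ← ha, ← hb]; exact Rat.add_den_dvd q r)

lemma Dy.mul {q r : ℚ} (hq : Dy q) (hr : Dy r) : Dy (q * r) := by
  obtain ⟨a, ha⟩ := hq; obtain ⟨b, hb⟩ := hr
  exact dy_of_dvd (m := a + b) (by rw [pow_add, ← ha, ← hb]; exact Rat.mul_den_dvd q r)

lemma dy_half : Dy (1 / 2 : ℚ) := ⟨1, by norm_num⟩

lemma Dy.sub {q r : ℚ} (hq : Dy q) (hr : Dy r) : Dy (q - r) := by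
  rw [sub_eq_add_neg]
  exact hq.add ⟨hr.choose, by rw [Rat.neg_den]; exact hr.choose_spec⟩

lemma dy_one : Dy (1 : ℚ) := ⟨0, rfl⟩
lemma dy_zero : Dy (0 : ℚ) := ⟨0, rfl⟩

theorem sqrt_one_add_sq_den_pow_two (f : PowerSeries ℚ)
    (h0 : constantCoeff f = 1) (h2 : f ^ 2 = 1 + X ^ 2) :
    ∀ n : ℕ, ∃ k : ℕ, (coeff n f).den = 2 ^ k := by
  suffices h : ∀ n : ℕ, Dy (coeff n f) from h
  intro n
  induction n using Nat.strong_induction_on with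
  | _ n ih =>
    rcases Nat.eq_zero_or_pos n with rfl | hn
    · rw [← coeff_zero_eq_constantCoeff] at h0
      rw [h0]; exact dy_one
    -- key identity
    have key : ∑ i ∈ Finset.range (n + 1), coeff i f * coeff (n - i) f
        = coeff n (1 + X ^ 2 : PowerSeries ℚ) := by
      rw [← h2, sq, coeff_mul, Finset.Nat.sum_antidiagonal_eq_sum_range_succ_mk]
    have hc : Dy (coeff n ((1 : PowerSeries ℚ) + X ^ 2)) := by
      rw [map_add, coeff_X_pow, coeff_one]
      split_ifs <;> simp [dy_zero, dy_one, Dy.add, dy_zero.add dy_one, dy_one.add dy_zero,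
        dy_zero.add dy_zero]
    -- split sum
    have hsplit : ∑ i ∈ Finset.range (n + 1), coeff i f * coeff (n - i) f
        = coeff n f + (∑ i ∈ Finset.Ico 1 n, coeff i f * coeff (n - i) f)
          + coeff n f := by
      have h00 : coeff 0 f = 1 := by rwa [coeff_zero_eq_constantCoeff]
      rw [Finset.sum_range_succ, Finset.range_eq_Ico,
        Finset.sum_eq_sum_Ico_succ_bot hn (fun i => coeff i f * coeff (n - i) f)]
      simp [h00, Nat.sub_self]
    have h2an : 2 * coeff n f = coeff n ((1 : PowerSeries ℚ) + X ^ 2)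
        - ∑ i ∈ Finset.Ico 1 n, coeff i f * coeff (n - i) f := by
      rw [← key, hsplit]; ring
    have han : coeff n f = (1/2) * (coeff n ((1 : PowerSeries ℚ) + X ^ 2)
        - ∑ i ∈ Finset.Ico 1 n, coeff i f * coeff (n - i) f) := by
      rw [← h2an]; ring
    rw [han]
    refine dy_half.mul (hc.sub ?_)
    classical
    refine Finset.sum_induction _ Dy (fun a b => Dy.add) dy_zero ?_
    intro i hi
    rw [Finset.mem_Ico] at hi
    exact (ih i (by omega)).mul (ih (n - i) (by omega))
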